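/- Let H be a symmetric operator on a finite-dimensional real inner product space whose smallest eigenvalue E₀ is simple with unit eigenvector ψ₀, and let E₁ be the second smallest eigenvalue. Suppose v is a unit vector with Rayleigh quotient E(v) = ⟨v, Hv⟩ ≤ (E₀ + E₁)/2. Then ⟨v, ψ₀⟩² ≥ 1/2. -/

import Mathlib

open scoped RealInnerProductSpace

/-- If the energy of a unit vector `v` is at most the midpoint `(E₀+E₁)/2` between the simple
smallest eigenvalue `E₀` (with unit eigenvector `ψ₀`) and the second smallest eigenvalue
`E₁`, then the overlap satisfies `⟪v, ψ₀⟫² ≥ 1/2`. -/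
theorem overlap_below_midpoint
    {F : Type*} [NormedAddCommGroup F] [InnerProductSpace ℝ F] [FiniteDimensional ℝ F]
    (H : F →L[ℝ] F) (hH : ∀ x y : F, ⟪H x, y⟫ = ⟪x, H y⟫)
    (E₀ E₁ : ℝ) (hgap : E₀ < E₁)
    (ψ₀ : F) (hψ₀ : ‖ψ₀‖ = 1) (heig : H ψ₀ = E₀ • ψ₀)
    (hspec : ∀ w : F, ⟪ψ₀, w⟫ = 0 → E₁ * ‖w‖ ^ 2 ≤ ⟪w, H w⟫)
    (v : F) (hv : ‖v‖ = 1) (hEv : ⟪v, H v⟫ ≤ (E₀ + E₁) / 2) :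
    (1 : ℝ) / 2 ≤ ⟪v, ψ₀⟫ ^ 2 := by
  set c : ℝ := ⟪v, ψ₀⟫ with hc
  set w : F := v - c • ψ₀ with hwdef
  have hψψ : ⟪ψ₀, ψ₀⟫ = (1 : ℝ) := by
    rw [real_inner_self_eq_norm_sq, hψ₀]; ring
  have hvv : ⟪v, v⟫ = (1 : ℝ) := by
    rw [real_inner_self_eq_norm_sq, hv]; ring
  have hψv : ⟪ψ₀, v⟫ = c := by rw [real_inner_comm]
  have hw0 : ⟪ψ₀, w⟫ = 0 := by
    simp [hwdef, inner_sub_right, inner_smul_right, hψψ, hψv, hψ₀]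
  have hwv : v = w + c • ψ₀ := by simp [hwdef]
  have hwnorm : ‖w‖ ^ 2 = 1 - c ^ 2 := by
    rw [← real_inner_self_eq_norm_sq, hwdef]
    simp only [inner_sub_left, inner_sub_right, inner_smul_left, inner_smul_right,
      hψψ, hψv, hvv, conj_trivial]
    ring
  have hHψw : ⟪ψ₀, H w⟫ = 0 := by
    rw [← hH, heig, real_inner_smul_left, hw0]; ring
  have hw0' : ⟪w, ψ₀⟫ = 0 := by rw [real_inner_comm]; exact hw0
  have henergy : ⟪v, H v⟫ = E₀ * c ^ 2 + ⟪w, H w⟫ := by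
    rw [hwv]
    simp only [map_add, map_smul, heig, inner_add_left, inner_add_right,
      inner_smul_left, inner_smul_right, conj_trivial, hψψ, hw0, hw0', hHψw]
    ring
  have hsw := hspec w hw0
  rw [hwnorm] at hsw
  nlinarith [hgap, hEv, henergy, hsw]
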